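/- Let E be a finite collection of measurable sets totally ordered by a relation ≺, and for each R ∈ E let E_{⪰R} = {S ∈ E : S ⪰ R}. Suppose there exist Λ ≥ 1 and η ∈ (0,1] such that μ({x ∈ R : h_{E_{⪰R}}(x) ≤ Λ}) ≥ η μ(R) for all R ∈ E. Then E is (η/Λ)-sparse with respect to μ; in particular ‖E‖_{Carleson(μ)} ≤ Λ η^{-1}. -/

import Mathlib

open MeasureTheory Set
open scoped ENNReal

theorem stmt3 {X : Type*} [MeasurableSpace X] (μ : Measure X)
    {ι : Type*} [LinearOrder ι] (s : Finset ι) (E : ι → Set X)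
    (hmeas : ∀ i ∈ s, MeasurableSet (E i))
    (hfin : ∀ i ∈ s, μ (E i) < ⊤)
    (Λ : ℝ≥0∞) (hΛ : 1 ≤ Λ) (η : ℝ≥0∞) (hη0 : 0 < η) (hη1 : η ≤ 1)
    (hsel : ∀ i ∈ s, η * μ (E i) ≤
      μ {x ∈ E i |
          (∑ j ∈ s.filter (fun j => i ≤ j), (E j).indicator (1 : X → ℝ≥0∞) x) ≤ Λ}) :
    (∃ φ : ι → X → ℝ≥0∞,
      (∀ i ∈ s, Measurable (φ i)) ∧
      (∀ i ∈ s, (η / Λ) * μ (E i) ≤ ∫⁻ x in E i, φ i x ∂μ) ∧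
      (∀ x, ∑ i ∈ s, φ i x ≤ 1)) ∧
    ∀ F ⊆ s, ∑ i ∈ F, μ (E i) ≤ (Λ / η) * μ (⋃ i ∈ F, E i) := by
  classical
  have hη' : η ≠ ⊤ := (hη1.trans_lt ENNReal.one_lt_top).ne
  have hΛ0 : Λ ≠ 0 := fun h => by simp [h] at hΛ
  set f : ι → X → ℝ≥0∞ := fun i x =>
    ∑ j ∈ s.filter (fun j => i ≤ j), (E j).indicator (1 : X → ℝ≥0∞) x with hf
  set G : ι → Set X := fun i => {x ∈ E i | f i x ≤ Λ} with hG
  have hGsub : ∀ i, G i ⊆ E i := fun i x hx => hx.1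
  have hGmeas : ∀ i ∈ s, MeasurableSet (G i) := by
    intro i hi
    have hfm : Measurable (f i) := by
      apply Finset.measurable_sum
      intro j hj
      exact measurable_one.indicator (hmeas j (Finset.mem_filter.mp hj).1)
    exact (hmeas i hi).inter (hfm measurableSet_Iic)
  set φ : ι → X → ℝ≥0∞ := fun i x => Λ⁻¹ * (G i).indicator 1 x with hφ
  have hφm : ∀ i ∈ s, Measurable (φ i) := by
    intro i hi
    exact (measurable_one.indicator (hGmeas i hi)).const_mul _
  have hsum1 : ∀ x, ∑ i ∈ s, φ i x ≤ 1 := by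
    intro x
    set T : Finset ι := s.filter (fun i => x ∈ G i) with hT
    have hsum : ∑ i ∈ s, φ i x = (T.card : ℝ≥0∞) * Λ⁻¹ := by
      rw [hφ]
      simp only
      rw [← Finset.sum_filter_add_sum_filter_not s (fun i => x ∈ G i)]
      have h1 : ∀ i ∈ T, Λ⁻¹ * (G i).indicator 1 x = Λ⁻¹ := by
        intro i hi
        rw [indicator_of_mem (Finset.mem_filter.mp hi).2]
        simp
      have h2 : ∀ i ∈ s.filter (fun i => ¬ x ∈ G i),
          Λ⁻¹ * (G i).indicator 1 x = 0 := by
        intro i hi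
        rw [indicator_of_notMem (Finset.mem_filter.mp hi).2]
        simp
      rw [Finset.sum_congr rfl h1, Finset.sum_congr rfl h2]
      simp [mul_comm]
    have hcard : (T.card : ℝ≥0∞) ≤ Λ := by
      rcases T.eq_empty_or_nonempty with h | hne
      · simp [h]
      · set i₀ := T.min' hne with hi₀def
        have hi₀ : i₀ ∈ T := T.min'_mem hne
        have hxG : x ∈ G i₀ := (Finset.mem_filter.mp hi₀).2
        have hfle : f i₀ x ≤ Λ := hxG.2
        have hTsub : T ⊆ s.filter (fun j => i₀ ≤ j) := by
          intro i hi
          exact Finset.mem_filter.mpr ⟨(Finset.mem_filter.mp hi).1, T.min'_le i hi⟩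
        have hkey : (T.card : ℝ≥0∞) = ∑ i ∈ T, (E i).indicator (1 : X → ℝ≥0∞) x := by
          rw [Finset.sum_congr rfl
            (fun i hi => indicator_of_mem (hGsub i (Finset.mem_filter.mp hi).2) _)]
          simp
          rfl
        rw [hkey]
        exact le_trans (Finset.sum_le_sum_of_subset hTsub) hfle
    rw [hsum]
    rcases eq_or_ne Λ ⊤ with h | h
    · simp [h]
    · calc (T.card : ℝ≥0∞) * Λ⁻¹ ≤ Λ * Λ⁻¹ := mul_le_mul_left hcard _
        _ = 1 := ENNReal.mul_inv_cancel hΛ0 h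
  have hlow : ∀ i ∈ s, (η / Λ) * μ (E i) ≤ ∫⁻ x in E i, φ i x ∂μ := by
    intro i hi
    have heq : ∫⁻ x in E i, φ i x ∂μ = Λ⁻¹ * μ (G i) := by
      calc ∫⁻ x in E i, φ i x ∂μ
          = ∫⁻ x in E i, (G i).indicator (fun _ => Λ⁻¹) x ∂μ := by
            refine lintegral_congr (fun x => ?_)
            by_cases hx : x ∈ G i <;> simp [hφ, hx]
        _ = Λ⁻¹ * (μ.restrict (E i)) (G i) := lintegral_indicator_const (hGmeas i hi) _
        _ = Λ⁻¹ * μ (G i) := by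
            rw [Measure.restrict_apply (hGmeas i hi), inter_eq_left.mpr (hGsub i)]
    rw [heq, ENNReal.div_eq_inv_mul, mul_assoc]
    exact mul_le_mul_right (hsel i hi) _
  refine ⟨⟨φ, hφm, hlow, hsum1⟩, ?_⟩
  · intro F hF
    set U := ⋃ i ∈ F, E i with hU
    have hEU : ∀ i ∈ F, E i ⊆ U := fun i hi => subset_biUnion_of_mem hi
    rcases eq_or_ne Λ ⊤ with hT | hT
    · have hdiv : Λ / η = ⊤ := by
        rw [hT, ENNReal.top_div]
        simp [hη']
      rw [hdiv]
      calc ∑ i ∈ F, μ (E i) ≤ ∑ _i ∈ F, μ U :=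
            Finset.sum_le_sum (fun i hi => measure_mono (hEU i hi))
        _ = (F.card : ℝ≥0∞) * μ U := by rw [Finset.sum_const, nsmul_eq_mul]
        _ ≤ ⊤ * μ U := mul_le_mul_left le_top _
    · have key : (η / Λ) * ∑ i ∈ F, μ (E i) ≤ μ U := by
        calc (η / Λ) * ∑ i ∈ F, μ (E i) = ∑ i ∈ F, (η / Λ) * μ (E i) :=
              Finset.mul_sum _ _ _
          _ ≤ ∑ i ∈ F, ∫⁻ x in E i, φ i x ∂μ :=
              Finset.sum_le_sum (fun i hi => hlow i (hF hi))
          _ ≤ ∑ i ∈ F, ∫⁻ x in U, φ i x ∂μ :=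
              Finset.sum_le_sum (fun i hi => lintegral_mono_set (hEU i hi))
          _ = ∫⁻ x in U, ∑ i ∈ F, φ i x ∂μ :=
              (lintegral_finset_sum' F (fun i hi => (hφm i (hF hi)).aemeasurable)).symm
          _ ≤ ∫⁻ _x in U, 1 ∂μ := by
              refine lintegral_mono (fun x => ?_)
              exact le_trans (Finset.sum_le_sum_of_subset hF) (hsum1 x)
          _ = μ U := by simp
      have hone : (Λ / η) * (η / Λ) = 1 := by
        rw [div_eq_mul_inv, div_eq_mul_inv, mul_mul_mul_comm,
          ← ENNReal.mul_inv (Or.inl hη0.ne') (Or.inl hη'), mul_comm Λ η,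
          ENNReal.mul_inv_cancel (mul_ne_zero hη0.ne' hΛ0) (ENNReal.mul_ne_top hη' hT)]
      calc ∑ i ∈ F, μ (E i) = ((Λ / η) * (η / Λ)) * ∑ i ∈ F, μ (E i) := by
            rw [hone, one_mul]
        _ = (Λ / η) * ((η / Λ) * ∑ i ∈ F, μ (E i)) := by rw [mul_assoc]
        _ ≤ (Λ / η) * μ U := mul_le_mul_right key _
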